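/- For α ∈ (1/2, 1), r > 0, θ ∈ (−π, π), and γ = α − 1/2, one has Re(e^{iθ/2} F_α(r e^{iθ})) ≥ 0, where F_α(z) = (1 − z^{α−1})/(z^α − 1) with principal branches. -/

import Mathlib

open Real Complex

lemma cpow_polar (r θ t : ℝ) (hr : 0 < r) (h1 : -Real.pi < θ) (h2 : θ ≤ Real.pi) :
    ((r : ℂ) * Complex.exp ((θ : ℝ) * Complex.I)) ^ ((t : ℝ) : ℂ)
      = ((r ^ t : ℝ) : ℂ) * Complex.exp (((t * θ : ℝ) : ℂ) * Complex.I) := by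
  have hw : ((r:ℂ) * Complex.exp ((θ:ℝ) * Complex.I))
      = Complex.exp ((Real.log r : ℂ) + (θ:ℝ) * Complex.I) := by
    rw [Complex.exp_add, ← Complex.ofReal_exp, Real.exp_log hr]
  have hlog : Complex.log ((r:ℂ) * Complex.exp ((θ:ℝ) * Complex.I))
      = (Real.log r : ℂ) + (θ:ℝ) * Complex.I := by
    rw [hw, Complex.log_exp] <;> simp [h1, h2]
  have hz : ((r:ℂ) * Complex.exp ((θ:ℝ) * Complex.I)) ≠ 0 := by
    rw [hw]; exact Complex.exp_ne_zero _
  rw [Complex.cpow_def_of_ne_zero hz, hlog]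
  rw [show ((Real.log r : ℂ) + (θ:ℝ) * Complex.I) * (t:ℂ)
      = ((Real.log r * t : ℝ) : ℂ) + ((t * θ : ℝ) : ℂ) * Complex.I by push_cast; ring]
  rw [Complex.exp_add, ← Complex.ofReal_exp, ← Real.rpow_def_of_pos hr]

theorem re_nonneg_Fa (α : ℝ) (hα : α ∈ Set.Ioo (1/2 : ℝ) 1) (r θ : ℝ) (hr : 0 < r)
    (hθ : θ ∈ Set.Ioo (-Real.pi) Real.pi) :
    0 ≤ (Complex.exp ((θ / 2 : ℝ) * Complex.I) *
      ((1 - ((r : ℂ) * Complex.exp ((θ : ℝ) * Complex.I)) ^ ((α : ℂ) - 1)) /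
        (((r : ℂ) * Complex.exp ((θ : ℝ) * Complex.I)) ^ ((α : ℂ)) - 1))).re := by
  obtain ⟨hθ1, hθ2⟩ := hθ
  obtain ⟨hα1, hα2⟩ := hα
  have e1 : ((r : ℂ) * Complex.exp ((θ : ℝ) * Complex.I)) ^ ((α : ℂ))
      = ((r ^ α : ℝ) : ℂ) * Complex.exp (((α * θ : ℝ) : ℂ) * Complex.I) :=
    cpow_polar r θ α hr hθ1 hθ2.le
  have e2 : ((r : ℂ) * Complex.exp ((θ : ℝ) * Complex.I)) ^ ((α : ℂ) - 1)
      = ((r ^ (α - 1) : ℝ) : ℂ) * Complex.exp ((((α - 1) * θ : ℝ) : ℂ) * Complex.I) := by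
    have := cpow_polar r θ (α - 1) hr hθ1 hθ2.le
    rw [show (((α - 1 : ℝ)) : ℂ) = (α : ℂ) - 1 by push_cast; ring] at this
    exact this
  rw [e1, e2]
  set A : ℝ := r ^ α with hA
  set B : ℝ := r ^ (α - 1) with hB
  set W : ℂ := Complex.exp ((θ / 2 : ℝ) * Complex.I) *
      (1 - (B : ℂ) * Complex.exp ((((α - 1) * θ : ℝ) : ℂ) * Complex.I)) with hWdef
  set D : ℂ := (A : ℂ) * Complex.exp (((α * θ : ℝ) : ℂ) * Complex.I) - 1 with hDdef
  rw [← mul_div_assoc, ← hWdef]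
  rw [Complex.div_re, ← add_div]
  apply div_nonneg _ (Complex.normSq_nonneg D)
  have hApos : 0 < A := Real.rpow_pos_of_pos hr _
  have hBpos : 0 < B := Real.rpow_pos_of_pos hr _
  have hkey : W.re * D.re + W.im * D.im
      = (A + B) * Real.cos ((α - 1/2) * θ) - (1 + A * B) * Real.cos (θ / 2) := by
    simp only [hWdef, hDdef, Complex.mul_re, Complex.mul_im, Complex.sub_re, Complex.sub_im,
      Complex.one_re, Complex.one_im, Complex.ofReal_re, Complex.ofReal_im,
      Complex.exp_ofReal_mul_I_re, Complex.exp_ofReal_mul_I_im]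
    rw [show (α - 1) * θ = (α - 1/2) * θ - θ/2 by ring,
        show α * θ = (α - 1/2) * θ + θ/2 by ring,
        Real.cos_add, Real.sin_add, Real.cos_sub, Real.sin_sub]
    have hprod : (Real.sin (θ/2)^2 + Real.cos (θ/2)^2) *
        (Real.sin ((α-1/2)*θ)^2 + Real.cos ((α-1/2)*θ)^2) = 1 := by
      rw [Real.sin_sq_add_cos_sq, Real.sin_sq_add_cos_sq]; ring
    linear_combination ((A + B) * Real.cos ((α - 1/2) * θ)) * (Real.sin_sq_add_cos_sq (θ/2))
      - A * B * Real.cos (θ/2) * hprod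
  rw [hkey]
  -- now real inequality
  have hc : 0 < Real.cos (θ / 2) := by
    apply Real.cos_pos_of_mem_Ioo
    constructor <;> [linarith; linarith]
  have hcC : Real.cos (θ / 2) ≤ Real.cos ((α - 1/2) * θ) := by
    have h1 : |(α - 1/2) * θ| ≤ |θ / 2| := by
      rw [abs_mul]
      have : |α - 1/2| ≤ 1/2 := by rw [abs_of_pos (by linarith)]; linarith
      calc |α - 1/2| * |θ| ≤ (1/2) * |θ| := by
            apply mul_le_mul_of_nonneg_right this (abs_nonneg _)
        _ = |θ / 2| := by rw [abs_div, _root_.abs_two]; ring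
    have h2 : |θ / 2| ≤ Real.pi := by
      rw [abs_le]; constructor <;> linarith [Real.pi_pos]
    calc Real.cos (θ / 2) = Real.cos |θ / 2| := (Real.cos_abs _).symm
      _ ≤ Real.cos |(α - 1/2) * θ| :=
          Real.cos_le_cos_of_nonneg_of_le_pi (abs_nonneg _) h2 h1
      _ = Real.cos ((α - 1/2) * θ) := Real.cos_abs _
  have hAB : 0 ≤ (A - 1) * (1 - B) := by
    rcases le_or_gt 1 r with h | h
    · have h1 : 1 ≤ A := Real.one_le_rpow h (by linarith)
      have h2 : B ≤ 1 := Real.rpow_le_one_of_one_le_of_nonpos h (by linarith)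
      nlinarith
    · have h1 : A ≤ 1 := Real.rpow_le_one hr.le h.le (by linarith)
      have h2 : 1 ≤ B := Real.one_le_rpow_of_pos_of_le_one_of_nonpos hr h.le (by linarith)
      nlinarith
  nlinarith [mul_le_mul_of_nonneg_left hcC (by linarith : (0:ℝ) ≤ A + B)]
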